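/- The pignistic probability lies between belief and plausibility: define P(θ) = Σ_{B ⊆ Θ, θ ∈ B} m(B)/|B| for each θ ∈ Θ, and P(A) = Σ_{θ ∈ A} P(θ). Then for every A ⊆ Θ, Bel(A) ≤ P(A) ≤ Pl(A). -/

import Mathlib

theorem pignistic_between_bel_pl {Θ : Type*} [Fintype Θ] [DecidableEq Θ] [Nonempty Θ]
    (m : Finset Θ → ℝ) (hnn : ∀ B, 0 ≤ m B) (h0 : m ∅ = 0)
    (htot : ∑ B : Finset Θ, m B = 1)
    (P : Θ → ℝ)
    (hP : ∀ θ, P θ = ∑ B ∈ Finset.univ.filter (fun B : Finset Θ => θ ∈ B), m B / B.card)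
    (A : Finset Θ) :
    ∑ B ∈ A.powerset, m B ≤ ∑ θ ∈ A, P θ ∧
      ∑ θ ∈ A, P θ ≤ ∑ B ∈ Finset.univ.filter (fun B : Finset Θ => B ∩ A ≠ ∅), m B := by
  have key : ∑ θ ∈ A, P θ = ∑ B : Finset Θ, ((B ∩ A).card : ℝ) * (m B / B.card) := by
    simp_rw [hP, Finset.sum_filter]
    rw [Finset.sum_comm]
    refine Finset.sum_congr rfl fun B _ => ?_
    rw [Finset.sum_ite_mem, Finset.inter_comm]
    rw [Finset.sum_const, nsmul_eq_mul]
  constructor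
  · have hpow : A.powerset = Finset.univ.filter (fun B => B ⊆ A) := by
      ext B; simp
    rw [key, hpow, Finset.sum_filter]
    refine Finset.sum_le_sum fun B _ => ?_
    split_ifs with h
    · rcases eq_or_ne B ∅ with rfl | hne
      · simp [h0]
      · rw [Finset.inter_eq_left.mpr h]
        have hc : (B.card : ℝ) ≠ 0 := by
          simp [Finset.card_eq_zero, hne]
        field_simp
        exact le_rfl
    · exact mul_nonneg (by positivity) (div_nonneg (hnn B) (by positivity))
  · rw [key, Finset.sum_filter]
    refine Finset.sum_le_sum fun B _ => ?_
    split_ifs with h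
    · have hB : B ≠ ∅ := fun hB => h (by simp [hB])
      have hc : (0:ℝ) < B.card := by
        have := Finset.card_pos.mpr (Finset.nonempty_of_ne_empty hB)
        exact_mod_cast this
      rw [div_eq_mul_inv, ← mul_assoc]
      have hle : ((B ∩ A).card : ℝ) ≤ B.card := by
        exact_mod_cast Finset.card_le_card (Finset.inter_subset_left)
      calc ((B ∩ A).card : ℝ) * m B * (B.card : ℝ)⁻¹
          ≤ (B.card : ℝ) * m B * (B.card : ℝ)⁻¹ := by
            have := hnn B
            gcongr
        _ = m B := by field_simp
    · have h' : B ∩ A = ∅ := not_not.mp h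
      simp [h']
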